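/- For all positive integers ℓ and K, ∫₀¹ (∑_{j=1}^{K} cos(2πjt))^ℓ dt ≤ (1 - 2^{-(ℓ-1)})·K^{ℓ-1}. -/

import Mathlib

open Real

private lemma int_cos_zero (m : ℤ) (hm : m ≠ 0) :
    ∫ t in (0 : ℝ)..1, Real.cos (2 * Real.pi * (m : ℝ) * t) = 0 := by
  have hc : (2 * Real.pi * (m : ℝ)) ≠ 0 := by
    have := Real.pi_ne_zero
    have : (m : ℝ) ≠ 0 := Int.cast_ne_zero.mpr hm
    positivity
  have h := intervalIntegral.integral_comp_mul_left (a := (0:ℝ)) (b := 1)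
    (fun x => Real.cos x) hc
  simp only [mul_zero, mul_one] at h
  rw [h, integral_cos, Real.sin_zero, sub_zero]
  have : Real.sin (2 * Real.pi * (m : ℝ)) = 0 := by
    have := Real.sin_int_mul_pi (2 * m)
    rw [show ((2 * m : ℤ) : ℝ) * Real.pi = 2 * Real.pi * (m : ℝ) by push_cast; ring] at this
    exact this
  rw [this, smul_zero]

private lemma cos_orth (i j : ℕ) (hi : 1 ≤ i) (hj : 1 ≤ j) :
    ∫ t in (0 : ℝ)..1,
      Real.cos (2 * Real.pi * (i : ℝ) * t) * Real.cos (2 * Real.pi * (j : ℝ) * t) =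
      if i = j then 1 / 2 else 0 := by
  have key : ∀ t : ℝ, Real.cos (2 * Real.pi * (i : ℝ) * t) * Real.cos (2 * Real.pi * (j : ℝ) * t)
      = (1 / 2) * Real.cos (2 * Real.pi * ((i : ℝ) + j) * t)
        + (1 / 2) * Real.cos (2 * Real.pi * ((i : ℝ) - j) * t) := by
    intro t
    rw [show 2 * Real.pi * ((i : ℝ) + j) * t
        = 2 * Real.pi * (i : ℝ) * t + 2 * Real.pi * (j : ℝ) * t by ring,
      show 2 * Real.pi * ((i : ℝ) - j) * t
        = 2 * Real.pi * (i : ℝ) * t - 2 * Real.pi * (j : ℝ) * t by ring,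
      Real.cos_add, Real.cos_sub]
    ring
  simp_rw [key]
  have h1 : IntervalIntegrable (fun t => (1 / 2 : ℝ) * Real.cos (2 * Real.pi * ((i : ℝ) + j) * t))
      MeasureTheory.volume 0 1 := (by fun_prop : Continuous _).intervalIntegrable _ _
  have h2 : IntervalIntegrable (fun t => (1 / 2 : ℝ) * Real.cos (2 * Real.pi * ((i : ℝ) - j) * t))
      MeasureTheory.volume 0 1 := (by fun_prop : Continuous _).intervalIntegrable _ _
  rw [intervalIntegral.integral_add h1 h2, intervalIntegral.integral_const_mul,
    intervalIntegral.integral_const_mul]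
  have hsum : ∫ t in (0 : ℝ)..1, Real.cos (2 * Real.pi * ((i : ℝ) + j) * t) = 0 := by
    have := int_cos_zero ((i : ℤ) + j) (by omega)
    push_cast at this ⊢
    exact this
  rw [hsum]
  by_cases hij : i = j
  · subst hij
    simp only [sub_self, mul_zero, zero_mul, Real.cos_zero, if_true]
    rw [intervalIntegral.integral_const]
    norm_num
  · have hm : ((i : ℤ) - j) ≠ 0 := by omega
    have := int_cos_zero ((i : ℤ) - j) hm
    push_cast at this
    rw [this]
    simp [hij]

private lemma sum_sq_integral (K : ℕ) (hK : 1 ≤ K) :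
    ∫ t in (0 : ℝ)..1, (∑ j ∈ Finset.Icc 1 K, Real.cos (2 * Real.pi * (j : ℝ) * t)) ^ 2
      = (K : ℝ) / 2 := by
  have hint : ∀ (i j : ℕ), IntervalIntegrable
      (fun t => Real.cos (2 * Real.pi * (i : ℝ) * t) * Real.cos (2 * Real.pi * (j : ℝ) * t))
      MeasureTheory.volume 0 1 := fun i j =>
    (by fun_prop : Continuous _).intervalIntegrable _ _
  have expand : ∀ t : ℝ, (∑ j ∈ Finset.Icc 1 K, Real.cos (2 * Real.pi * (j : ℝ) * t)) ^ 2
      = ∑ i ∈ Finset.Icc 1 K, ∑ j ∈ Finset.Icc 1 K,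
          Real.cos (2 * Real.pi * (i : ℝ) * t) * Real.cos (2 * Real.pi * (j : ℝ) * t) := by
    intro t
    rw [sq, Finset.sum_mul_sum]
  simp_rw [expand]
  rw [intervalIntegral.integral_finset_sum]
  · have : ∀ i ∈ Finset.Icc 1 K,
        (∫ t in (0:ℝ)..1, ∑ j ∈ Finset.Icc 1 K,
          Real.cos (2 * Real.pi * (i : ℝ) * t) * Real.cos (2 * Real.pi * (j : ℝ) * t))
        = (1 : ℝ) / 2 := by
      intro i hi
      rw [intervalIntegral.integral_finset_sum (fun j _ => hint i j)]
      have : ∀ j ∈ Finset.Icc 1 K,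
          (∫ t in (0:ℝ)..1,
            Real.cos (2 * Real.pi * (i : ℝ) * t) * Real.cos (2 * Real.pi * (j : ℝ) * t))
          = if i = j then (1:ℝ)/2 else 0 := fun j hj =>
        cos_orth i j (Finset.mem_Icc.mp hi).1 (Finset.mem_Icc.mp hj).1
      rw [Finset.sum_congr rfl this, Finset.sum_ite_eq (Finset.Icc 1 K) i (fun _ => (1:ℝ)/2),
        if_pos hi]
    rw [Finset.sum_congr rfl this, Finset.sum_const, Nat.card_Icc]
    simp
    ring
  · intro i _
    exact (by fun_prop : Continuous _).intervalIntegrable _ _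

theorem stmt_8 (ℓ K : ℕ) (hℓ : 1 ≤ ℓ) (hK : 1 ≤ K) :
    (∫ t in (0 : ℝ)..1, (∑ j ∈ Finset.Icc 1 K, Real.cos (2 * Real.pi * (j : ℝ) * t)) ^ ℓ) ≤
      (1 - (2 : ℝ) ^ (-((ℓ : ℤ) - 1))) * (K : ℝ) ^ (ℓ - 1) := by
  set S : ℝ → ℝ := fun t => ∑ j ∈ Finset.Icc 1 K, Real.cos (2 * Real.pi * (j : ℝ) * t) with hS
  have hScont : Continuous S := by fun_prop
  rcases eq_or_lt_of_le hℓ with h1 | h2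
  · -- ℓ = 1
    rw [← h1]
    simp only [pow_one]
    have : (∫ t in (0:ℝ)..1, S t) = 0 := by
      rw [hS, intervalIntegral.integral_finset_sum
        (fun j _ => (by fun_prop : Continuous _).intervalIntegrable 0 1)]
      apply Finset.sum_eq_zero
      intro j hj
      have := int_cos_zero (j : ℤ) (by have := (Finset.mem_Icc.mp hj).1; omega)
      push_cast at this
      exact this
    rw [this]
    simp
  · -- ℓ ≥ 2
    obtain ⟨m, rfl⟩ : ∃ m, ℓ = m + 2 := ⟨ℓ - 2, by omega⟩
    have habs : ∀ t, |S t| ≤ (K : ℝ) := by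
      intro t
      calc |S t| ≤ ∑ j ∈ Finset.Icc 1 K, |Real.cos (2 * Real.pi * (j : ℝ) * t)| :=
            Finset.abs_sum_le_sum_abs _ _
        _ ≤ ∑ _j ∈ Finset.Icc 1 K, (1 : ℝ) :=
            Finset.sum_le_sum (fun j _ => Real.abs_cos_le_one _)
        _ = (K : ℝ) := by rw [Finset.sum_const, Nat.card_Icc]; simp
    have hpow : ∀ t, S t ^ (m + 2) ≤ (K : ℝ) ^ m * S t ^ 2 := by
      intro t
      have hSm : S t ^ m ≤ (K : ℝ) ^ m := by
        rcases Nat.even_or_odd m with he | ho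
        · calc S t ^ m = |S t| ^ m := (he.pow_abs _).symm
            _ ≤ (K : ℝ) ^ m := pow_le_pow_left₀ (abs_nonneg _) (habs t) m
        · exact ho.strictMono_pow.monotone ((abs_le.mp (habs t)).2)
      calc S t ^ (m + 2) = S t ^ m * S t ^ 2 := by ring
        _ ≤ (K : ℝ) ^ m * S t ^ 2 :=
            mul_le_mul_of_nonneg_right hSm (sq_nonneg _)
    have hmono : (∫ t in (0:ℝ)..1, S t ^ (m + 2)) ≤ ∫ t in (0:ℝ)..1, (K : ℝ) ^ m * S t ^ 2 := by
      apply intervalIntegral.integral_mono_on (by norm_num)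
      · exact (hScont.pow _).intervalIntegrable _ _
      · exact (continuous_const.mul (hScont.pow 2)).intervalIntegrable _ _
      · intro t _; exact hpow t
    have hval : (∫ t in (0:ℝ)..1, (K : ℝ) ^ m * S t ^ 2) = (K : ℝ) ^ m * ((K : ℝ) / 2) := by
      rw [intervalIntegral.integral_const_mul, hS]
      rw [sum_sq_integral K hK]
    calc (∫ t in (0:ℝ)..1, S t ^ (m + 2)) ≤ (K : ℝ) ^ m * ((K : ℝ) / 2) := by
          rw [← hval]; exact hmono
      _ = (1 / 2) * (K : ℝ) ^ (m + 1) := by ring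
      _ ≤ (1 - (2 : ℝ) ^ (-(((m + 2 : ℕ) : ℤ) - 1))) * (K : ℝ) ^ (m + 2 - 1) := by
          have hexp : (m + 2 - 1 : ℕ) = m + 1 := by omega
          rw [hexp]
          apply mul_le_mul_of_nonneg_right _ (by positivity)
          have h2 : (2 : ℝ) ^ (-(((m + 2 : ℕ) : ℤ) - 1)) ≤ (2 : ℝ) ^ (-1 : ℤ) := by
            apply zpow_le_zpow_right₀ (by norm_num)
            push_cast; omega
          have : ((2 : ℝ)) ^ (-1 : ℤ) = 1 / 2 := by norm_num
          linarith [h2, this ▸ h2]
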